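/- arXiv:2012.01705 — 3 statements merged into one kernel-verified Lean document; each statement's English description precedes it below -/
import Mathlib

section
/- Let N ≥ 1 and let L_1, …, L_T ∈ ℝ^N be loss vectors. For λ > 0 define q_t ∈ ℝ^N by (q_t)_i = exp(−(1/λ)·Σ_{s=1}^t (L_s)_i) / Σ_{j=1}^N exp(−(1/λ)·Σ_{s=1}^t (L_s)_j). If ‖L_{t+1}‖_∞ ≤ 1 then ‖q_{t+1} − q_t‖_1 ≤ 2·(e^{2/λ} − 1). In particular, for λ ≥ 2 one has ‖q_{t+1} − q_t‖_1 ≤ 2(e−1)·(2/λ) ≤ 8/λ. -/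
set_option maxHeartbeats 1000000

lemma exp_le_linear {x : ℝ} (h0 : 0 ≤ x) (h1 : x ≤ 1) :
    Real.exp x ≤ 1 + (Real.exp 1 - 1) * x := by
  have := convexOn_exp.2 (Set.mem_univ (0:ℝ)) (Set.mem_univ (1:ℝ))
    (by linarith : (0:ℝ) ≤ 1 - x) h0 (by ring)
  simp only [smul_eq_mul, mul_zero, mul_one, zero_add, Real.exp_zero] at this
  nlinarith [this]

theorem stmt11 (N : ℕ) (hN : 1 ≤ N) (lam : ℝ) (hlam : 0 < lam) (L : ℕ → Fin N → ℝ)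
    (q : ℕ → Fin N → ℝ)
    (hq : ∀ t i, q t i =
      Real.exp (-(1 / lam) * ∑ s ∈ Finset.Icc 1 t, L s i) /
        ∑ j, Real.exp (-(1 / lam) * ∑ s ∈ Finset.Icc 1 t, L s j))
    (t : ℕ) (hL : ∀ i, |L (t + 1) i| ≤ 1) :
    (∑ i, |q (t + 1) i - q t i| ≤ 2 * (Real.exp (2 / lam) - 1)) ∧
    (2 ≤ lam →
      (∑ i, |q (t + 1) i - q t i| ≤ 2 * (Real.exp 1 - 1) * (2 / lam)) ∧
        2 * (Real.exp 1 - 1) * (2 / lam) ≤ 8 / lam) := by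
  have hNe : Nonempty (Fin N) := ⟨⟨0, hN⟩⟩
  set c : ℝ := 1 / lam with hc
  have hcpos : 0 < c := by positivity
  set a : Fin N → ℝ := fun i => Real.exp (-c * ∑ s ∈ Finset.Icc 1 t, L s i) with ha
  set b : Fin N → ℝ := fun i => Real.exp (-c * ∑ s ∈ Finset.Icc 1 (t+1), L s i) with hb
  set A : ℝ := ∑ j, a j with hA
  set B : ℝ := ∑ j, b j with hB
  have hApos : 0 < A := Finset.sum_pos (fun i _ => Real.exp_pos _) Finset.univ_nonempty
  have hBpos : 0 < B := Finset.sum_pos (fun i _ => Real.exp_pos _) Finset.univ_nonempty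
  have hbi : ∀ i, b i = a i * Real.exp (-c * L (t+1) i) := by
    intro i
    simp only [hb, ha]
    rw [Finset.sum_Icc_succ_top (by omega : 1 ≤ t + 1)]
    rw [← Real.exp_add]
    ring_nf
  -- bounds on b
  have hub : ∀ i, b i ≤ Real.exp c * a i := by
    intro i
    rw [hbi i, mul_comm (a i)]
    apply mul_le_mul_of_nonneg_right _ (Real.exp_pos _).le
    apply Real.exp_le_exp.2
    have := (abs_le.1 (hL i)).1
    nlinarith [hcpos]
  have hlb : ∀ i, Real.exp (-c) * a i ≤ b i := by
    intro i
    rw [hbi i, mul_comm (a i)]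
    apply mul_le_mul_of_nonneg_right _ (Real.exp_pos _).le
    apply Real.exp_le_exp.2
    have := (abs_le.1 (hL i)).2
    nlinarith [hcpos]
  have hBub : B ≤ Real.exp c * A := by
    rw [hB, hA, Finset.mul_sum]; exact Finset.sum_le_sum fun i _ => hub i
  have hBlb : Real.exp (-c) * A ≤ B := by
    rw [hB, hA, Finset.mul_sum]; exact Finset.sum_le_sum fun i _ => hlb i
  have hqt : ∀ i, q t i = a i / A := fun i => hq t i
  have hqt1 : ∀ i, q (t+1) i = b i / B := fun i => hq (t+1) i
  have hapos : ∀ i, 0 < a i := fun i => Real.exp_pos _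
  have key : ∀ i, |q (t+1) i - q t i| ≤ (Real.exp (2*c) - 1) * q t i := by
    intro i
    rw [hqt, hqt1]
    have h1 : b i / B ≤ Real.exp (2*c) * (a i / A) := by
      rw [div_le_iff₀ hBpos]
      have hsplit2 : Real.exp (2*c) = Real.exp c * Real.exp c := by
        rw [← Real.exp_add]; ring_nf
      have heq : Real.exp (2*c) * (a i / A) * B = (Real.exp c * a i) * (Real.exp c / A * B) := by
        rw [hsplit2]; field_simp
      rw [heq]
      have h2 : 1 ≤ Real.exp c / A * B := by
        have h' := hBlb
        rw [Real.exp_neg, inv_mul_le_iff₀ (Real.exp_pos c)] at h'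
        rw [div_mul_eq_mul_div, le_div_iff₀ hApos, one_mul]
        exact h'
      calc b i ≤ Real.exp c * a i := hub i
        _ = (Real.exp c * a i) * 1 := (mul_one _).symm
        _ ≤ (Real.exp c * a i) * (Real.exp c / A * B) := by
            apply mul_le_mul_of_nonneg_left h2
            positivity
    have h3 : Real.exp (-(2*c)) * (a i / A) ≤ b i / B := by
      rw [le_div_iff₀ hBpos]
      have hmc : Real.exp (-(2*c)) * Real.exp c = Real.exp (-c) := by
        rw [← Real.exp_add]; congr 1; ring
      calc Real.exp (-(2*c)) * (a i / A) * B
          ≤ Real.exp (-(2*c)) * (a i / A) * (Real.exp c * A) := by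
            apply mul_le_mul_of_nonneg_left hBub; positivity
        _ = (Real.exp (-(2*c)) * Real.exp c) * a i * (A / A) := by ring
        _ = Real.exp (-c) * a i := by rw [hmc, div_self hApos.ne', mul_one]
        _ ≤ b i := hlb i
    have hq0 : 0 < a i / A := by positivity
    have hexp2 : 1 - Real.exp (-(2*c)) ≤ Real.exp (2*c) - 1 := by
      nlinarith [Real.add_one_le_exp (2*c), Real.add_one_le_exp (-(2*c))]
    rw [abs_le]
    constructor
    · nlinarith
    · nlinarith
  have hsum1 : ∑ i, q t i = 1 := by
    simp only [hqt]
    rw [← Finset.sum_div, ← hA, div_self hApos.ne']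
  have h2c : 2 * c = 2 / lam := by rw [hc]; ring
  have main : ∑ i, |q (t+1) i - q t i| ≤ Real.exp (2/lam) - 1 := by
    calc ∑ i, |q (t+1) i - q t i| ≤ ∑ i, (Real.exp (2*c) - 1) * q t i :=
          Finset.sum_le_sum fun i _ => key i
      _ = (Real.exp (2*c) - 1) * ∑ i, q t i := by rw [Finset.mul_sum]
      _ = Real.exp (2/lam) - 1 := by rw [hsum1, h2c, mul_one]
  have hexp_ge : (0:ℝ) ≤ Real.exp (2/lam) - 1 := by
    have : (0:ℝ) ≤ 2/lam := by positivity
    nlinarith [Real.add_one_le_exp (2/lam)]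
  refine ⟨by linarith, fun h2 => ?_⟩
  have hx0 : (0:ℝ) ≤ 2/lam := by positivity
  have hx1 : 2/lam ≤ 1 := by rw [div_le_one hlam]; linarith
  have hlin := exp_le_linear hx0 hx1
  have he3 : Real.exp 1 ≤ 3 := by
    have h := Real.exp_one_lt_d9
    norm_num at h
    linarith
  have he1 : 1 ≤ Real.exp 1 := by
    nlinarith [Real.add_one_le_exp (1:ℝ)]
  constructor
  · calc ∑ i, |q (t+1) i - q t i| ≤ Real.exp (2/lam) - 1 := main
      _ ≤ (Real.exp 1 - 1) * (2/lam) := by linarith only [hlin, main]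
      _ ≤ 2 * (Real.exp 1 - 1) * (2/lam) := by
          have hnn : 0 ≤ (Real.exp 1 - 1) * (2/lam) := mul_nonneg (by linarith only [he1]) hx0
          linarith only [hnn]
  · have : 2 * (Real.exp 1 - 1) * (2/lam) = (4 * (Real.exp 1 - 1)) / lam := by ring
    rw [this, div_le_div_iff₀ hlam hlam]
    nlinarith [he3, hlam]
end

section
/- Let T ≥ 1 and L ≥ 1 with L ≤ T. Then inf over β ∈ [1, L] of ((β − 1)·T/L + √(L·T)/√(β + 1)) is at least √(L·T)/√2 whenever L ≤ (32T)^{1/3}, and at least 2^{1/3}·T^{2/3} whenever L > (32T)^{1/3}. -/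
lemma cube_rpow_third (x : ℝ) (hx : 0 ≤ x) : (x ^ ((1:ℝ)/3)) ^ (3:ℕ) = x := by
  rw [← Real.rpow_natCast (x ^ ((1:ℝ)/3)) 3, ← Real.rpow_mul hx]
  norm_num

theorem stmt16 (T L : ℝ) (hT : 1 ≤ T) (hL : 1 ≤ L) (hLT : L ≤ T) :
    (L ≤ (32 * T) ^ ((1 : ℝ) / 3) → ∀ β ∈ Set.Icc (1 : ℝ) L,
      Real.sqrt (L * T) / Real.sqrt 2 ≤ (β - 1) * T / L + Real.sqrt (L * T) / Real.sqrt (β + 1)) ∧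
    ((32 * T) ^ ((1 : ℝ) / 3) < L → ∀ β ∈ Set.Icc (1 : ℝ) L,
      2 ^ ((1 : ℝ) / 3) * T ^ ((2 : ℝ) / 3) ≤
        (β - 1) * T / L + Real.sqrt (L * T) / Real.sqrt (β + 1)) := by
  have hT0 : (0:ℝ) < T := lt_of_lt_of_le one_pos hT
  have hL0 : (0:ℝ) < L := lt_of_lt_of_le one_pos hL
  constructor
  · intro hc β hβ
    obtain ⟨hβ1, hβL⟩ := hβ
    have hL3 : L ^ 3 ≤ 32 * T := by
      calc L ^ 3 ≤ ((32*T) ^ ((1:ℝ)/3)) ^ 3 := pow_le_pow_left₀ hL0.le hc 3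
        _ = 32 * T := cube_rpow_third _ (by positivity)
    set sa := Real.sqrt (β + 1) with hsadef
    set s2 := Real.sqrt 2 with hs2def
    set sLT := Real.sqrt (L * T) with hsLTdef
    have hsa2 : sa ^ 2 = β + 1 := Real.sq_sqrt (by linarith)
    have hs22 : s2 ^ 2 = 2 := Real.sq_sqrt (by norm_num)
    have hsLT2 : sLT ^ 2 = L * T := Real.sq_sqrt (by positivity)
    have hsa0 : 0 < sa := Real.sqrt_pos.mpr (by linarith)
    have hs20 : 0 < s2 := Real.sqrt_pos.mpr (by norm_num)
    have hsLT0 : 0 ≤ sLT := Real.sqrt_nonneg _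
    have hsas2 : s2 ≤ sa := Real.sqrt_le_sqrt (by linarith)
    have h5 : sLT * L ≤ 4 * s2 * T := by
      have e1 : sLT * L = Real.sqrt (L * T * L ^ 2) := by
        rw [Real.sqrt_mul (by positivity), Real.sqrt_sq hL0.le]
      have e2 : 4 * s2 * T = Real.sqrt (2 * (4 * T) ^ 2) := by
        rw [Real.sqrt_mul (by norm_num), Real.sqrt_sq (by positivity)]; ring
      rw [e1, show (32:ℝ) * T = 2 * 16 * T by ring] at *
      rw [e2]
      apply Real.sqrt_le_sqrt
      nlinarith
    have hfac : sLT * L ≤ (sa + s2) * (s2 * sa) * T := by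
      have h6 : 4 * s2 ≤ (sa + s2) * (s2 * sa) := by nlinarith
      nlinarith
    have hmul : (sa - s2) * (sLT * L) ≤ (sa - s2) * ((sa + s2) * (s2 * sa) * T) :=
      mul_le_mul_of_nonneg_left hfac (sub_nonneg.mpr hsas2)
    have hb : β - 1 = sa ^ 2 - s2 ^ 2 := by rw [hsa2, hs22]; ring
    have key : sLT * L * sa ≤ (β - 1) * T * (s2 * sa) + sLT * L * s2 := by
      rw [hb]; nlinarith [hmul]
    rw [div_add_div _ _ (ne_of_gt hL0) (ne_of_gt hsa0),
      div_le_div_iff₀ hs20 (by positivity)]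
    nlinarith [key]
  · intro hc β hβ
    obtain ⟨hβ1, hβL⟩ := hβ
    have h32 : 32 * T ≤ L ^ 3 := by
      calc 32 * T = ((32*T) ^ ((1:ℝ)/3)) ^ 3 := (cube_rpow_third _ (by positivity)).symm
        _ ≤ L ^ 3 := pow_le_pow_left₀ (by positivity) hc.le 3
    set sa := Real.sqrt (β + 1) with hsadef
    set sLT := Real.sqrt (L * T) with hsLTdef
    have hsa2 : sa ^ 2 = β + 1 := Real.sq_sqrt (by linarith)
    have hsLT2 : sLT ^ 2 = L * T := Real.sq_sqrt (by positivity)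
    have hsa0 : 0 < sa := Real.sqrt_pos.mpr (by linarith)
    have hsLT0 : 0 ≤ sLT := Real.sqrt_nonneg _
    set a := (β + 1) * T / L with hadef
    set b := sLT / sa with hbdef
    have ha0 : 0 ≤ a := by positivity
    have hb0 : 0 ≤ b := by positivity
    have hb2 : b ^ 2 = L * T / (β + 1) := by
      rw [hbdef, div_pow, hsLT2, hsa2]
    have hab : a * b ^ 2 = T ^ 2 := by
      rw [hb2, hadef]
      field_simp
    set m := (2:ℝ) ^ (-(2:ℝ)/3) * T ^ ((2:ℝ)/3) with hmdef
    have hm0 : 0 ≤ m := by positivity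
    have hm3 : m ^ 3 = T ^ 2 / 4 := by
      rw [hmdef, mul_pow]
      rw [← Real.rpow_natCast ((2:ℝ) ^ (-(2:ℝ)/3)) 3, ← Real.rpow_mul (by norm_num : (0:ℝ) ≤ 2)]
      rw [← Real.rpow_natCast (T ^ ((2:ℝ)/3)) 3, ← Real.rpow_mul hT0.le]
      norm_num
      ring
    have hAM : 3 * m ≤ a + b := by
      have hcube3 : (3 * m) ^ 3 ≤ (a + b) ^ 3 := by
        nlinarith [mul_nonneg (sq_nonneg (b - 2*a)) (by positivity : (0:ℝ) ≤ 4*b + a), hab, hm3]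
      exact le_of_pow_le_pow_left₀ (by norm_num) (by positivity) hcube3
    have hkey32 : (32 * T) ^ ((1:ℝ)/3) * m = 2 * T := by
      rw [Real.mul_rpow (by norm_num) hT0.le, hmdef,
        show (32:ℝ) = 2 ^ ((5:ℝ)) by
          rw [show (5:ℝ) = ((5:ℕ):ℝ) by norm_num, Real.rpow_natCast]; norm_num,
        ← Real.rpow_mul (by norm_num : (0:ℝ) ≤ 2)]
      rw [show (2:ℝ) ^ ((5:ℝ) * (1/3)) * T ^ ((1:ℝ)/3) * (2 ^ (-(2:ℝ)/3) * T ^ ((2:ℝ)/3))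
          = (2 ^ ((5:ℝ) * (1/3)) * 2 ^ (-(2:ℝ)/3)) * (T ^ ((1:ℝ)/3) * T ^ ((2:ℝ)/3)) by ring]
      rw [← Real.rpow_add (by norm_num : (0:ℝ) < 2), ← Real.rpow_add hT0]
      norm_num
    have h2TL : 2 * T / L ≤ m := by
      rw [div_le_iff₀ hL0]
      calc 2 * T = (32 * T) ^ ((1:ℝ)/3) * m := hkey32.symm
        _ ≤ L * m := mul_le_mul_of_nonneg_right hc.le hm0
        _ = m * L := mul_comm _ _
    have h2m : 2 ^ ((1:ℝ)/3) * T ^ ((2:ℝ)/3) = 2 * m := by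
      have e : (2:ℝ) * 2 ^ (-(2:ℝ)/3) = 2 ^ ((1:ℝ)/3) := by
        nth_rewrite 1 [← Real.rpow_one (2:ℝ)]
        rw [← Real.rpow_add (by norm_num : (0:ℝ) < 2)]
        norm_num
      rw [hmdef, ← mul_assoc, e]
    have hsplit : (β - 1) * T / L + sLT / sa = a + b - 2 * T / L := by
      rw [hadef, hbdef]; field_simp; ring
    rw [h2m, hsplit]
    linarith
end

section
/- Let M_1, M_2 be square matrices with ‖M_i‖ ≤ 1 − γ for γ ∈ (0,1), and let W be a matrix with ‖W‖ ≤ ε. Suppose X_1 and X_2 are (the unique) solutions of X_i = M_i X_i M_i^⊤ + C for a fixed matrix C with ‖X_i‖ ≤ R, where M_2 = M_1 + E with ‖E‖ ≤ δ. Then ‖X_1 − X_2‖ ≤ 2·(1−γ)·R·δ / (1 − (1−γ)²) ≤ R·δ/γ · 2. -/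
open ContinuousLinearMap

set_option maxHeartbeats 1000000 in
theorem stmt19 {n : ℕ} (γ δ R ε : ℝ) (hγ : γ ∈ Set.Ioo (0 : ℝ) 1) (hδ : 0 ≤ δ) (hR : 0 ≤ R)
    (M₁ M₂ Eop W C X₁ X₂ : EuclideanSpace ℝ (Fin n) →L[ℝ] EuclideanSpace ℝ (Fin n))
    (hM1 : ‖M₁‖ ≤ 1 - γ) (hM2 : ‖M₂‖ ≤ 1 - γ) (hW : ‖W‖ ≤ ε)
    (hX1 : X₁ = M₁ ∘L X₁ ∘L ContinuousLinearMap.adjoint M₁ + C)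
    (hX2 : X₂ = M₂ ∘L X₂ ∘L ContinuousLinearMap.adjoint M₂ + C)
    (hXR1 : ‖X₁‖ ≤ R) (hXR2 : ‖X₂‖ ≤ R)
    (hE : M₂ = M₁ + Eop) (hEδ : ‖Eop‖ ≤ δ) :
    ‖X₁ - X₂‖ ≤ 2 * (1 - γ) * R * δ / (1 - (1 - γ) ^ 2) ∧
      2 * (1 - γ) * R * δ / (1 - (1 - γ) ^ 2) ≤ 2 * (R * δ / γ) := by
  obtain ⟨hγ0, hγ1⟩ := hγ
  have h1γ : 0 ≤ 1 - γ := by linarith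
  have hden : 0 < 1 - (1 - γ) ^ 2 := by nlinarith
  -- key identity
  have key : X₁ - X₂ = M₁ ∘L (X₁ - X₂) ∘L adjoint M₁
      - (Eop ∘L X₂ ∘L adjoint M₂ + M₁ ∘L X₂ ∘L adjoint Eop) := by
    conv_lhs => rw [hX1, hX2]
    rw [hE, map_add]
    simp only [add_comp, comp_add, comp_sub, sub_comp]
    abel
  have hadj : ∀ A : EuclideanSpace ℝ (Fin n) →L[ℝ] EuclideanSpace ℝ (Fin n),
      ‖adjoint A‖ = ‖A‖ := fun A => LinearIsometryEquiv.norm_map _ A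
  set d := ‖X₁ - X₂‖ with hd
  have hd0 : 0 ≤ d := norm_nonneg _
  have hbound : d ≤ (1 - γ) ^ 2 * d + 2 * (1 - γ) * R * δ := by
    calc d = ‖M₁ ∘L (X₁ - X₂) ∘L adjoint M₁
        - (Eop ∘L X₂ ∘L adjoint M₂ + M₁ ∘L X₂ ∘L adjoint Eop)‖ := by rw [hd, ← key]
      _ ≤ ‖M₁ ∘L (X₁ - X₂) ∘L adjoint M₁‖
          + (‖Eop ∘L X₂ ∘L adjoint M₂‖ + ‖M₁ ∘L X₂ ∘L adjoint Eop‖) := by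
        refine (norm_sub_le _ _).trans ?_
        gcongr
        exact norm_add_le _ _
      _ ≤ ‖M₁‖ * (‖X₁ - X₂‖ * ‖adjoint M₁‖)
          + (‖Eop‖ * (‖X₂‖ * ‖adjoint M₂‖) + ‖M₁‖ * (‖X₂‖ * ‖adjoint Eop‖)) := by
        gcongr <;>
          exact (opNorm_comp_le _ _).trans (by gcongr; exact opNorm_comp_le _ _)
      _ ≤ (1 - γ) * (d * (1 - γ)) + (δ * (R * (1 - γ)) + (1 - γ) * (R * δ)) := by
        rw [hadj, hadj, hadj]
        gcongr <;> first | exact hM1 | exact hM2 | exact hXR2 | exact hEδ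
      _ = (1 - γ) ^ 2 * d + 2 * (1 - γ) * R * δ := by ring
  clear_value d
  clear key hX1 hX2 hadj hE hM1 hM2 hW hXR1 hXR2 hd hEδ M₁ M₂ Eop W C X₁ X₂
  constructor
  · rw [le_div_iff₀ hden]
    nlinarith
  · have hRδ : 0 ≤ R * δ := mul_nonneg hR hδ
    rw [show (1 : ℝ) - (1 - γ) ^ 2 = γ * (2 - γ) by ring,
      show 2 * (R * δ / γ) = 2 * (R * δ) / γ by ring]
    refine div_le_div₀ (by positivity) ?_ hγ0 ?_
    · nlinarith [mul_nonneg hRδ hγ0.le]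
    · nlinarith [mul_nonneg hγ0.le h1γ]
end
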